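/- The genus of a connected fatgraph, defined by g = 1 − (v − e + r)/2 where r is the number of cycles of α∘σ, is a nonnegative integer. -/

import Mathlib

/-- The number of cycles of a permutation (including fixed points as trivial cycles). -/
def cycleCount {H : Type*} [Fintype H] [DecidableEq H] (f : Equiv.Perm H) : ℕ :=
  f.cycleType.card + (Fintype.card H - f.support.card)

namespace FatgraphAux

open Equiv Equiv.Perm

variable {H : Type*} [Fintype H] [DecidableEq H]

lemma neg_one_pow_congr {a b : ℕ} (h : a % 2 = b % 2) :
    ((-1 : ℤˣ)) ^ a = (-1 : ℤˣ) ^ b := by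
  rcases Nat.even_or_odd a with ha | ha
  · have hb : Even b := by rw [Nat.even_iff] at *; omega
    rw [Even.neg_one_pow ha, Even.neg_one_pow hb]
  · have hb : Odd b := by rw [Nat.odd_iff] at *; omega
    rw [Odd.neg_one_pow ha, Odd.neg_one_pow hb]

lemma neg_one_pow_inj {a b : ℕ} (h : ((-1 : ℤˣ)) ^ a = (-1 : ℤˣ) ^ b) :
    a % 2 = b % 2 := by
  by_contra hc
  rcases Nat.even_or_odd a with ha | ha
  · have hb : Odd b := by rw [Nat.even_iff] at ha; rw [Nat.odd_iff]; omega
    rw [Even.neg_one_pow ha, Odd.neg_one_pow hb] at h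
    exact absurd h (by decide)
  · have hb : Even b := by rw [Nat.odd_iff] at ha; rw [Nat.even_iff]; omega
    rw [Odd.neg_one_pow ha, Even.neg_one_pow hb] at h
    exact absurd h (by decide)

lemma neg_one_pow_ne {a b : ℕ} (h : ((-1 : ℤˣ)) ^ a = -((-1 : ℤˣ)) ^ b) :
    a % 2 ≠ b % 2 := by
  intro hc
  rw [neg_one_pow_congr hc] at h
  rcases Int.units_eq_one_or ((-1 : ℤˣ) ^ b) with h1 | h1 <;> rw [h1] at h <;>
    exact absurd h (by decide)

/-- The setoid obtained from `s` by additionally identifying `i` and `j`. -/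
def addPair (s : Setoid H) (i j : H) : Setoid H where
  r x y := s x y ∨ (s x i ∧ s j y) ∨ (s x j ∧ s i y)
  iseqv := by
    refine ⟨fun x => Or.inl (s.refl' x), ?_, ?_⟩
    · rintro x y (h | ⟨h1, h2⟩ | ⟨h1, h2⟩)
      · exact Or.inl (s.symm' h)
      · exact Or.inr (Or.inr ⟨s.symm' h2, s.symm' h1⟩)
      · exact Or.inr (Or.inl ⟨s.symm' h2, s.symm' h1⟩)
    · rintro x y z (h | ⟨h1, h2⟩ | ⟨h1, h2⟩) (g | ⟨g1, g2⟩ | ⟨g1, g2⟩)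
      · exact Or.inl (s.trans' h g)
      · exact Or.inr (Or.inl ⟨s.trans' h g1, g2⟩)
      · exact Or.inr (Or.inr ⟨s.trans' h g1, g2⟩)
      · exact Or.inr (Or.inl ⟨h1, s.trans' h2 g⟩)
      · exact Or.inl (s.trans' h1 (s.trans' (s.symm' (s.trans' h2 g1)) g2))
      · exact Or.inl (s.trans' h1 g2)
      · exact Or.inr (Or.inr ⟨h1, s.trans' h2 g⟩)
      · exact Or.inl (s.trans' h1 g2)
      · exact Or.inl (s.trans' h1 (s.trans' (s.symm' (s.trans' h2 g1)) g2))

lemma addPair_rel_left {s : Setoid H} {x y : H} (i j : H) (h : s x y) :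
    addPair s i j x y := Or.inl h

lemma addPair_rel_pair (s : Setoid H) (i j : H) : addPair s i j i j :=
  Or.inr (Or.inl ⟨s.refl' i, s.refl' j⟩)

lemma addPair_eq_self {s : Setoid H} {i j : H} (h : s i j) : addPair s i j = s := by
  ext x y
  constructor
  · rintro (hr | ⟨h1, h2⟩ | ⟨h1, h2⟩)
    · exact hr
    · exact s.trans' h1 (s.trans' h (s.symm' (s.symm' h2)))
    · exact s.trans' h1 (s.trans' (s.symm' h) h2)
  · exact fun hr => Or.inl hr

/-- Monotone map on quotients, giving a cardinality inequality. -/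
lemma card_quot_le_of_le {s t : Setoid H} (h : ∀ x y, s x y → t x y) :
    Nat.card (Quotient t) ≤ Nat.card (Quotient s) := by
  have hs : Function.Surjective
      (Quotient.map' (id : H → H) (fun a b hab => h a b hab) :
        Quotient s → Quotient t) := by
    intro q
    induction q using Quotient.ind' with
    | h a => exact ⟨Quotient.mk'' a, rfl⟩
  exact Nat.card_le_card_of_surjective _ hs

lemma card_quot_le_addPair (s : Setoid H) (i j : H) :
    Nat.card (Quotient s) ≤ Nat.card (Quotient (addPair s i j)) + 1 := by
  classical
  let f : H → Option (Quotient (addPair s i j)) := fun x =>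
    if s x i then none else some (Quotient.mk'' x)
  have hwd : ∀ a b : H, s a b → f a = f b := by
    intro a b hab
    by_cases ha : s a i
    · have hb : s b i := s.trans' (s.symm' hab) ha
      simp only [f, if_pos ha, if_pos hb]
    · have hb : ¬ s b i := fun hb => ha (s.trans' hab hb)
      simp only [f, if_neg ha, if_neg hb]
      exact congrArg some (Quotient.sound' (Or.inl hab))
  let F : Quotient s → Option (Quotient (addPair s i j)) := Quotient.lift f hwd
  have hinj : Function.Injective F := by
    intro q1 q2 hq
    induction q1 using Quotient.ind' with
  | h a =>
    induction q2 using Quotient.ind' with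
  | h b =>
    have hq' : f a = f b := hq
    apply Quotient.sound'
    by_cases ha : s a i <;> by_cases hb : s b i
    · exact s.trans' ha (s.symm' hb)
    · simp only [f, if_pos ha, if_neg hb] at hq'
      exact absurd hq' (by simp)
    · simp only [f, if_neg ha, if_pos hb] at hq'
      exact absurd hq' (by simp)
    · simp only [f, if_neg ha, if_neg hb, Option.some_inj] at hq'
      rcases Quotient.exact' hq' with h | ⟨h1, h2⟩ | ⟨h1, h2⟩
      · exact h
      · exact absurd h1 ha
      · exact absurd (s.symm' h2) hb
  have hle := Nat.card_le_card_of_injective F hinj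
  rwa [Finite.card_option] at hle

lemma card_quot_addPair_lt {s : Setoid H} {i j : H} (h : ¬ s i j) :
    Nat.card (Quotient (addPair s i j)) < Nat.card (Quotient s) := by
  have hle : Nat.card (Quotient (addPair s i j)) ≤ Nat.card (Quotient s) :=
    card_quot_le_of_le (fun x y => addPair_rel_left i j)
  rcases lt_or_eq_of_le hle with hlt | heq
  · exact hlt
  exfalso
  have hs : Function.Surjective
      (Quotient.map' (id : H → H) (fun a b hab => addPair_rel_left i j hab) :
        Quotient s → Quotient (addPair s i j)) := by
    intro q
    induction q using Quotient.ind' with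
    | h a => exact ⟨Quotient.mk'' a, rfl⟩
  have hbij := (Nat.bijective_iff_surjective_and_card _).mpr ⟨hs, heq.symm⟩
  have : (Quotient.mk'' i : Quotient s) = Quotient.mk'' j := by
    apply hbij.injective
    exact Quotient.sound' (addPair_rel_pair s i j)
  exact h (Quotient.exact' this)

/-- The orbit setoid of a set of permutations. -/
def orbS (s : Set (Equiv.Perm H)) : Setoid H :=
  Relation.EqvGen.setoid (fun x y => ∃ p ∈ s, p x = y)

lemma orbS_move {s : Set (Equiv.Perm H)} {p : Equiv.Perm H} (hp : p ∈ s) (x : H) :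
    orbS s x (p x) :=
  Relation.EqvGen.rel _ _ ⟨p, hp, rfl⟩

lemma orbS_le {s t : Set (Equiv.Perm H)}
    (h : ∀ p ∈ s, ∀ x : H, orbS t x (p x)) :
    ∀ x y, orbS s x y → orbS t x y := by
  intro x y hxy
  change Relation.EqvGen _ x y at hxy
  induction hxy with
  | rel a b hab => obtain ⟨p, hp, rfl⟩ := hab; exact h p hp a
  | refl a => exact (orbS t).refl' a
  | symm a b _ ih => exact (orbS t).symm' ih
  | trans a b c _ _ ih1 ih2 => exact (orbS t).trans' ih1 ih2

lemma orbS_eq_of {s t : Set (Equiv.Perm H)}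
    (h1 : ∀ p ∈ s, ∀ x : H, orbS t x (p x))
    (h2 : ∀ p ∈ t, ∀ x : H, orbS s x (p x)) : orbS s = orbS t := by
  ext x y
  exact ⟨orbS_le h1 x y, orbS_le h2 x y⟩

lemma rel_pow {S : Setoid H} {g : Equiv.Perm H} (hg : ∀ x, S x (g x)) :
    ∀ (k : ℕ) (x : H), S x ((g ^ k) x) := by
  intro k
  induction k with
  | zero => intro x; simpa using S.refl' x
  | succ n ih =>
    intro x
    have : (g ^ (n + 1)) x = (g ^ n) (g x) := by
      rw [pow_succ]; rfl
    rw [this]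
    exact S.trans' (hg x) (ih (g x))

lemma rel_zpow {S : Setoid H} {g : Equiv.Perm H} (hg : ∀ x, S x (g x)) :
    ∀ (k : ℤ) (x : H), S x ((g ^ k) x) := by
  intro k x
  rcases k with n | n
  · simpa using rel_pow hg n x
  · apply S.symm'
    have h := rel_pow hg (n + 1) ((g ^ (Int.negSucc n)) x)
    have key : (g ^ (n + 1 : ℕ)) ((g ^ (Int.negSucc n)) x) = x := by
      have h0 : ((n + 1 : ℕ) : ℤ) + Int.negSucc n = 0 := by
        rw [Int.negSucc_eq]; push_cast; ring
      rw [← zpow_natCast g (n + 1), ← Equiv.Perm.mul_apply, ← zpow_add, h0, zpow_zero,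
        Equiv.Perm.one_apply]
    rwa [key] at h

lemma rel_of_sameCycle {S : Setoid H} {p : Equiv.Perm H}
    (hp : ∀ x, S x (p x)) {i j : H} (h : p.SameCycle i j) : S i j := by
  obtain ⟨k, hk⟩ := h
  have := rel_zpow hp k i
  rwa [hk] at this

lemma orbS_singleton_iff {p : Equiv.Perm H} {x y : H} :
    orbS {p} x y ↔ p.SameCycle x y := by
  constructor
  · intro h
    change Relation.EqvGen _ x y at h
    induction h with
    | rel a b hab =>
      obtain ⟨q, hq, rfl⟩ := hab
      rw [Set.mem_singleton_iff] at hq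
      subst hq
      exact ⟨1, by simp⟩
    | refl a => exact Equiv.Perm.SameCycle.refl p a
    | symm a b _ ih => exact ih.symm
    | trans a b c _ _ ih1 ih2 => exact ih1.trans ih2
  · exact rel_of_sameCycle (fun z => orbS_move (s := {p}) rfl z)

lemma cycleCount_eq_card (p : Equiv.Perm H) :
    cycleCount p = Nat.card (Quotient (orbS {p})) := by
  classical
  set T := ({c // c ∈ p.cycleFactorsFinset} ⊕ {x : H // p x = x}) with hT
  have hfun : ∀ x : H, p x ≠ x → p.cycleOf x ∈ p.cycleFactorsFinset := by
    intro x hx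
    exact Equiv.Perm.cycleOf_mem_cycleFactorsFinset_iff.mpr (Equiv.Perm.mem_support.mpr hx)
  let f : H → T := fun x =>
    if h : p x = x then Sum.inr ⟨x, h⟩ else Sum.inl ⟨p.cycleOf x, hfun x h⟩
  have hresp : ∀ a b : H, orbS {p} a b → f a = f b := by
    intro a b hab
    have hsc : p.SameCycle a b := orbS_singleton_iff.mp hab
    by_cases ha : p a = a
    · have hb : b = a := by
        obtain ⟨k, hk⟩ := hsc
        rw [← hk, Equiv.Perm.zpow_apply_eq_self_of_apply_eq_self ha k]
      subst hb
      rfl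
    · have hb : ¬ p b = b := by
        intro hb
        apply ha
        obtain ⟨k, hk⟩ := hsc.symm
        have hba : a = b := by
          rw [← hk, Equiv.Perm.zpow_apply_eq_self_of_apply_eq_self hb k]
        rw [hba]
        exact hb
      simp only [f, dif_neg ha, dif_neg hb]
      exact congrArg Sum.inl (Subtype.ext (Equiv.Perm.SameCycle.cycleOf_eq hsc))
  let F : Quotient (orbS {p}) → T := Quotient.lift f hresp
  have hbij : Function.Bijective F := by
    constructor
    · intro q1 q2 hq
      induction q1 using Quotient.ind with
  | _ a =>
      induction q2 using Quotient.ind with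
  | _ b =>
      have hq' : f a = f b := hq
      apply Quotient.sound
      show orbS {p} a b
      rw [orbS_singleton_iff]
      by_cases ha : p a = a
      · by_cases hb : p b = b
        · rw [show f a = Sum.inr ⟨a, ha⟩ from dif_pos ha,
              show f b = Sum.inr ⟨b, hb⟩ from dif_pos hb] at hq'
          obtain rfl : a = b := congrArg Subtype.val (Sum.inr.inj hq')
          exact Equiv.Perm.SameCycle.refl p a
        · rw [show f a = Sum.inr ⟨a, ha⟩ from dif_pos ha,
              show f b = Sum.inl ⟨p.cycleOf b, hfun b hb⟩ from dif_neg hb] at hq'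
          exact absurd hq' (by simp)
      · by_cases hb : p b = b
        · rw [show f a = Sum.inl ⟨p.cycleOf a, hfun a ha⟩ from dif_neg ha,
              show f b = Sum.inr ⟨b, hb⟩ from dif_pos hb] at hq'
          exact absurd hq' (by simp)
        · rw [show f a = Sum.inl ⟨p.cycleOf a, hfun a ha⟩ from dif_neg ha,
              show f b = Sum.inl ⟨p.cycleOf b, hfun b hb⟩ from dif_neg hb] at hq'
          have hcyc : p.cycleOf a = p.cycleOf b := congrArg Subtype.val (Sum.inl.inj hq')
          have hbmem : b ∈ (p.cycleOf a).support := by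
            rw [hcyc, Equiv.Perm.mem_support_cycleOf_iff]
            exact ⟨Equiv.Perm.SameCycle.refl p b, Equiv.Perm.mem_support.mpr hb⟩
          rw [Equiv.Perm.mem_support_cycleOf_iff] at hbmem
          exact hbmem.1
    · rintro (⟨c, hc⟩ | ⟨x, hx⟩)
      · have hc' := Equiv.Perm.mem_cycleFactorsFinset_iff.mp hc
        obtain ⟨x, hx⟩ := hc'.1.nonempty_support
        have hxp : p x ≠ x := by
          have := hc'.2 x hx
          intro hcon
          rw [hcon] at this
          exact (Equiv.Perm.mem_support.mp hx) this
        refine ⟨Quotient.mk _ x, ?_⟩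
        show f x = _
        rw [show f x = Sum.inl ⟨p.cycleOf x, hfun x hxp⟩ from dif_neg hxp]
        exact congrArg Sum.inl (Subtype.ext (Equiv.Perm.cycle_is_cycleOf hx hc).symm)
      · exact ⟨Quotient.mk _ x, show f x = _ from dif_pos hx⟩
  have hcard : Nat.card (Quotient (orbS {p})) = Nat.card T := Nat.card_eq_of_bijective F hbij
  rw [hcard]
  have h1 : Nat.card T = p.cycleFactorsFinset.card + Nat.card {x : H // p x = x} := by
    simp [hT, Nat.card_sum, Nat.card_eq_fintype_card]
  rw [h1]
  have h2 : Multiset.card p.cycleType = p.cycleFactorsFinset.card := by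
    rw [Equiv.Perm.cycleType_def]
    simp
  have h3 : Nat.card {x : H // p x = x} = Fintype.card H - p.support.card := by
    rw [Nat.card_eq_fintype_card, Fintype.card_subtype]
    have : p.support = Finset.filter (fun x => ¬ p x = x) Finset.univ := by
      ext x; simp [Equiv.Perm.mem_support]
    rw [this]
    have h4 := Finset.card_filter_add_card_filter_not
      (s := (Finset.univ : Finset H)) (p := fun x => p x = x)
    have h5 : (Finset.univ : Finset H).card = Fintype.card H := Finset.card_univ
    omega
  rw [cycleCount, h2, h3]

lemma cycleCount_le (p : Equiv.Perm H) : cycleCount p ≤ Fintype.card H := by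
  have h1 : Multiset.card p.cycleType ≤ p.support.card := by
    rw [← Equiv.Perm.sum_cycleType]
    have := Multiset.card_nsmul_le_sum (s := p.cycleType) (a := 1)
      (fun x hx => Nat.one_le_of_lt (Equiv.Perm.two_le_of_mem_cycleType hx))
    simpa using this
  have h2 : p.support.card ≤ Fintype.card H := Finset.card_le_univ _
  unfold cycleCount
  omega

lemma cycleCount_one : cycleCount (1 : Equiv.Perm H) = Fintype.card H := by
  unfold cycleCount
  simp

lemma eq_one_of_cycleCount (p : Equiv.Perm H)
    (h : Fintype.card H ≤ cycleCount p) : p = 1 := by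
  have h1 : Multiset.card p.cycleType * 2 ≤ p.support.card := by
    rw [← Equiv.Perm.sum_cycleType]
    have := Multiset.card_nsmul_le_sum (s := p.cycleType) (a := 2)
      (fun x hx => Equiv.Perm.two_le_of_mem_cycleType hx)
    simpa [mul_comm] using this
  have h2 : p.support.card ≤ Fintype.card H := Finset.card_le_univ _
  unfold cycleCount at h
  have : Multiset.card p.cycleType = 0 := by omega
  exact Equiv.Perm.card_cycleType_eq_zero.mp this

lemma sign_eq_pow (p : Equiv.Perm H) :
    Equiv.Perm.sign p = (-1 : ℤˣ) ^ (Fintype.card H + cycleCount p) := by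
  rw [Equiv.Perm.sign_of_cycleType, Equiv.Perm.sum_cycleType]
  apply neg_one_pow_congr
  have h1 : Multiset.card p.cycleType ≤ p.support.card := by
    rw [← Equiv.Perm.sum_cycleType]
    have := Multiset.card_nsmul_le_sum (s := p.cycleType) (a := 1)
      (fun x hx => Nat.one_le_of_lt (Equiv.Perm.two_le_of_mem_cycleType hx))
    simpa using this
  have h2 : p.support.card ≤ Fintype.card H := Finset.card_le_univ _
  unfold cycleCount
  omega

lemma cycleCount_parity_ne {i j : H} (hij : i ≠ j) (p : Equiv.Perm H) :
    cycleCount (p * Equiv.swap i j) % 2 ≠ cycleCount p % 2 := by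
  have hs : Equiv.Perm.sign (p * Equiv.swap i j) = - Equiv.Perm.sign p := by
    rw [map_mul, Equiv.Perm.sign_swap hij, mul_neg_one]
  rw [sign_eq_pow, sign_eq_pow] at hs
  have := neg_one_pow_ne hs
  omega

lemma orbS_insert_swap (s : Set (Equiv.Perm H)) {i j : H} (hij : i ≠ j) :
    orbS (insert (Equiv.swap i j) s) = addPair (orbS s) i j := by
  ext x y
  constructor
  · intro h
    change Relation.EqvGen _ x y at h
    induction h with
    | rel a b hab =>
      obtain ⟨q, hq, rfl⟩ := hab
      rcases Set.mem_insert_iff.mp hq with rfl | hq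
      · by_cases hai : a = i
        · rw [hai, Equiv.swap_apply_left]
          exact Or.inr (Or.inl ⟨(orbS s).refl' i, (orbS s).refl' j⟩)
        · by_cases haj : a = j
          · rw [haj, Equiv.swap_apply_right]
            exact Or.inr (Or.inr ⟨(orbS s).refl' j, (orbS s).refl' i⟩)
          · rw [Equiv.swap_apply_of_ne_of_ne hai haj]
      · exact Or.inl (orbS_move hq a)
    | refl a => exact (addPair (orbS s) i j).refl' a
    | symm a b _ ih => exact (addPair (orbS s) i j).symm' ih
    | trans a b c _ _ ih1 ih2 => exact (addPair (orbS s) i j).trans' ih1 ih2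
  · have hmono : ∀ a b : H, orbS s a b → orbS (insert (Equiv.swap i j) s) a b :=
      orbS_le (fun p hp x => orbS_move (Set.mem_insert_of_mem _ hp) x)
    have hij' : orbS (insert (Equiv.swap i j) s) i j := by
      have := orbS_move (s := insert (Equiv.swap i j) s) (Set.mem_insert _ _) i
      rwa [Equiv.swap_apply_left] at this
    rintro (h | ⟨h1, h2⟩ | ⟨h1, h2⟩)
    · exact hmono x y h
    · exact (orbS _).trans' (hmono _ _ h1)
        ((orbS _).trans' hij' (hmono _ _ h2))
    · exact (orbS _).trans' (hmono _ _ h1)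
        ((orbS _).trans' ((orbS _).symm' hij') (hmono _ _ h2))

lemma orbS_insert_swap_mul (s : Set (Equiv.Perm H)) (p : Equiv.Perm H) (i j : H) :
    orbS (insert (Equiv.swap i j) (insert p s)) =
      orbS (insert (Equiv.swap i j) (insert (p * Equiv.swap i j) s)) := by
  set τ := Equiv.swap i j with hτ
  apply orbS_eq_of
  · rintro q hq x
    rcases Set.mem_insert_iff.mp hq with hq1 | hq
    · rw [hq1]
      exact orbS_move (Set.mem_insert _ _) x
    rcases Set.mem_insert_iff.mp hq with hq1 | hq
    · rw [hq1]
      have h1 : orbS (insert τ (insert (p * τ) s)) x (τ x) :=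
        orbS_move (Set.mem_insert _ _) x
      have h2 : orbS (insert τ (insert (p * τ) s)) (τ x) ((p * τ) (τ x)) :=
        orbS_move (Set.mem_insert_of_mem _ (Set.mem_insert _ _)) (τ x)
      have h3 : (p * τ) (τ x) = p x := by
        rw [Equiv.Perm.mul_apply, hτ, Equiv.swap_apply_self]
      rw [h3] at h2
      exact (orbS _).trans' h1 h2
    · exact orbS_move (Set.mem_insert_of_mem _ (Set.mem_insert_of_mem _ hq)) x
  · rintro q hq x
    rcases Set.mem_insert_iff.mp hq with hq1 | hq
    · rw [hq1]
      exact orbS_move (Set.mem_insert _ _) x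
    rcases Set.mem_insert_iff.mp hq with hq1 | hq
    · rw [hq1]
      have h1 : orbS (insert τ (insert p s)) x (τ x) :=
        orbS_move (Set.mem_insert _ _) x
      have h2 : orbS (insert τ (insert p s)) (τ x) (p (τ x)) :=
        orbS_move (Set.mem_insert_of_mem _ (Set.mem_insert _ _)) (τ x)
      have h3 : p (τ x) = (p * τ) x := rfl
      rw [h3] at h2
      exact (orbS _).trans' h1 h2
    · exact orbS_move (Set.mem_insert_of_mem _ (Set.mem_insert_of_mem _ hq)) x

/-- Multiplying by a transposition of two points in the same cycle splits the cycle. -/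
lemma cycleCount_mul_swap_of_sameCycle {p : Equiv.Perm H} {i j : H}
    (hij : i ≠ j) (h : p.SameCycle i j) :
    cycleCount (p * Equiv.swap i j) = cycleCount p + 1 := by
  classical
  set τ := Equiv.swap i j with hτ
  -- u = orbS {τ, p} = addPair (orbS {p}) i j = orbS {p}
  have hins : (insert τ {p} : Set (Equiv.Perm H)) = insert τ (insert p ∅) := by
    simp
  have hu1 : orbS (insert τ {p}) = addPair (orbS {p}) i j := orbS_insert_swap _ hij
  have hrel : orbS {p} i j := orbS_singleton_iff.mpr h
  have hu2 : addPair (orbS {p}) i j = orbS {p} := addPair_eq_self hrel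
  -- orbS (insert τ {p}) = orbS (insert τ {p * τ})
  have hexch : orbS (insert τ {p}) = orbS (insert τ {p * τ}) := by
    have := orbS_insert_swap_mul (∅ : Set (Equiv.Perm H)) p i j
    simpa using this
  have hu3 : orbS (insert τ {p * τ}) = addPair (orbS {p * τ}) i j := orbS_insert_swap _ hij
  -- cardinalities
  set cs := Nat.card (Quotient (orbS {p})) with hcs
  set ct := Nat.card (Quotient (orbS {p * τ})) with hct
  have hA : Nat.card (Quotient (addPair (orbS {p * τ}) i j)) = cs := by
    rw [← hu3, ← hexch, hu1, hu2]
  have hB : ct ≤ cs + 1 := by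
    have := card_quot_le_addPair (orbS {p * τ}) i j
    omega
  have hC : cs ≤ ct := by
    rw [← hA]
    exact card_quot_le_of_le (fun x y => addPair_rel_left i j)
  have hpar := cycleCount_parity_ne hij p
  rw [cycleCount_eq_card, cycleCount_eq_card, ← hτ] at hpar
  rw [cycleCount_eq_card, cycleCount_eq_card]
  omega

/-- Multiplying by a transposition of two points in different cycles merges cycles. -/
lemma cycleCount_mul_swap_of_not_sameCycle {p : Equiv.Perm H} {i j : H}
    (hij : i ≠ j) (h : ¬ p.SameCycle i j) :
    cycleCount p = cycleCount (p * Equiv.swap i j) + 1 := by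
  classical
  set τ := Equiv.swap i j with hτ
  have hu1 : orbS (insert τ {p}) = addPair (orbS {p}) i j := orbS_insert_swap _ hij
  have hrel : ¬ orbS {p} i j := fun hr => h (orbS_singleton_iff.mp hr)
  have hexch : orbS (insert τ {p}) = orbS (insert τ {p * τ}) := by
    have := orbS_insert_swap_mul (∅ : Set (Equiv.Perm H)) p i j
    simpa using this
  have hu3 : orbS (insert τ {p * τ}) = addPair (orbS {p * τ}) i j := orbS_insert_swap _ hij
  set cs := Nat.card (Quotient (orbS {p})) with hcs
  set ct := Nat.card (Quotient (orbS {p * τ})) with hct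
  set cu := Nat.card (Quotient (addPair (orbS {p}) i j)) with hcu
  have hA : Nat.card (Quotient (addPair (orbS {p * τ}) i j)) = cu := by
    rw [← hu3, ← hexch, hu1]
  have hlt : cu < cs := card_quot_addPair_lt hrel
  have hge : cs ≤ cu + 1 := card_quot_le_addPair _ _ _
  have hB : ct ≤ cu + 1 := by
    have := card_quot_le_addPair (orbS {p * τ}) i j
    omega
  have hC : cu ≤ ct := by
    rw [← hA]
    exact card_quot_le_of_le (fun x y => addPair_rel_left i j)
  have hpar := cycleCount_parity_ne hij p
  rw [cycleCount_eq_card, cycleCount_eq_card, ← hτ] at hpar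
  rw [cycleCount_eq_card, cycleCount_eq_card]
  omega

lemma orbS_pair_one (a : Equiv.Perm H) : orbS {a, (1 : Equiv.Perm H)} = orbS {a} := by
  apply orbS_eq_of
  · rintro q hq x
    rcases Set.mem_insert_iff.mp hq with rfl | hq
    · exact orbS_move (s := {q}) rfl x
    · rw [Set.mem_singleton_iff] at hq
      subst hq
      simpa using (orbS {a}).refl' x
  · rintro q hq x
    rw [Set.mem_singleton_iff] at hq
    subst hq
    exact orbS_move (Set.mem_insert _ _) x

/-- The key inequality: for any two permutations,
`c(a) + c(b) + c(ab) ≤ n + 2 · (number of orbits of ⟨a,b⟩)`. -/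
lemma key_aux (d : ℕ) : ∀ a b : Equiv.Perm H,
    Fintype.card H ≤ cycleCount b + d →
    cycleCount a + cycleCount b + cycleCount (a * b)
      ≤ Fintype.card H + 2 * Nat.card (Quotient (orbS {a, b})) := by
  induction d with
  | zero =>
    intro a b hb
    have hb1 : b = 1 := eq_one_of_cycleCount b (by omega)
    subst hb1
    rw [mul_one, cycleCount_one, orbS_pair_one, ← cycleCount_eq_card]
    omega
  | succ d ih =>
    intro a b hb
    by_cases hcase : Fintype.card H ≤ cycleCount b + d
    · exact ih a b hcase
    -- b ≠ 1 : pick a moved point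
    have hbne : b ≠ 1 := by
      intro h1
      rw [h1, cycleCount_one] at hcase
      omega
    obtain ⟨i, hi⟩ : ∃ i, b i ≠ i := by
      by_contra hcon
      push_neg at hcon
      exact hbne (Equiv.ext hcon)
    set j := b i with hj
    have hij : i ≠ j := fun hconeq => hi hconeq.symm
    set τ := Equiv.swap i j with hτ
    set b' := b * τ with hb'
    have hsc : b.SameCycle i j := ⟨1, by simp [hj]⟩
    have hcb' : cycleCount b' = cycleCount b + 1 :=
      cycleCount_mul_swap_of_sameCycle hij hsc
    have hbb' : b = b' * τ := by
      rw [hb', mul_assoc, hτ]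
      simp
    have hab : a * b = (a * b') * τ := by rw [hbb', ← mul_assoc]
    have hIH := ih a b' (by omega)
    have hmoves : ∀ x : H, orbS {a, b'} x ((a * b') x) := by
      intro x
      have h1 : orbS {a, b'} x (b' x) :=
        orbS_move (s := ({a, b'} : Set (Equiv.Perm H))) (Set.mem_insert_of_mem _ rfl) x
      have h2 : orbS {a, b'} (b' x) (a (b' x)) := orbS_move (Set.mem_insert _ _) (b' x)
      exact (orbS _).trans' h1 h2
    have hexch : orbS (insert τ {a, b'}) = orbS (insert τ {a, b}) := by
      have h1 : ({a, b'} : Set (Equiv.Perm H)) = insert b' {a} := Set.pair_comm a b'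
      have h2 : ({a, b} : Set (Equiv.Perm H)) = insert b {a} := Set.pair_comm a b
      rw [h1, h2, hbb', hτ]
      exact orbS_insert_swap_mul ({a} : Set (Equiv.Perm H)) b' i j
    have heq1 : orbS (insert τ {a, b'}) = addPair (orbS {a, b'}) i j :=
      orbS_insert_swap _ hij
    have heq2 : orbS (insert τ {a, b}) = addPair (orbS {a, b}) i j :=
      orbS_insert_swap _ hij
    set o := Nat.card (Quotient (orbS ({a, b} : Set (Equiv.Perm H)))) with ho
    set o' := Nat.card (Quotient (orbS ({a, b'} : Set (Equiv.Perm H)))) with ho'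
    have hP : Nat.card (Quotient (addPair (orbS {a, b'}) i j)) =
        Nat.card (Quotient (addPair (orbS {a, b}) i j)) := by
      rw [← heq1, ← heq2, hexch]
    have hPle : Nat.card (Quotient (addPair (orbS ({a, b} : Set (Equiv.Perm H))) i j)) ≤ o :=
      card_quot_le_of_le (fun x y => addPair_rel_left i j)
    by_cases hq : (a * b').SameCycle i j
    · have hcab : cycleCount (a * b) = cycleCount (a * b') + 1 := by
        rw [hab]
        exact cycleCount_mul_swap_of_sameCycle hij hq
      have hrel : orbS {a, b'} i j := rel_of_sameCycle hmoves hq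
      have ho'eq : Nat.card (Quotient (addPair (orbS ({a, b'} : Set (Equiv.Perm H))) i j)) = o' := by
        rw [addPair_eq_self hrel]
      have hoo : o' ≤ o := by omega
      omega
    · have hcab : cycleCount (a * b') = cycleCount (a * b) + 1 := by
        rw [hab]
        exact cycleCount_mul_swap_of_not_sameCycle hij hq
      have h1 : o' ≤ Nat.card (Quotient (addPair (orbS ({a, b'} : Set (Equiv.Perm H))) i j)) + 1 :=
        card_quot_le_addPair _ _ _
      have hoo : o' ≤ o + 1 := by omega
      omega

lemma key (a b : Equiv.Perm H) :
    cycleCount a + cycleCount b + cycleCount (a * b)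
      ≤ Fintype.card H + 2 * Nat.card (Quotient (orbS {a, b})) :=
  key_aux (Fintype.card H) a b (by omega)

end FatgraphAux

/-- For a connected fatgraph `(σ, α)` on a (nonempty) finite set of half-edges,
with `α` a fixed-point-free involution and the group generated by `σ` and `α` acting
transitively, the genus defined by `g = 1 - (v - e + r)/2` is a nonnegative integer:
there exists `g : ℕ` with `v - e + r = 2 - 2g`, where `v`, `e`, `r` are the numbers of
cycles of `σ`, `α` and `α ∘ σ` respectively. -/
theorem fatgraph_genus_nonneg_integer {H : Type*} [Fintype H] [DecidableEq H] [Nonempty H]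
    (σ α : Equiv.Perm H) (hinv : ∀ x, α (α x) = x) (hfpf : ∀ x, α x ≠ x)
    (hconn : ∀ x y : H, ∃ p ∈ Subgroup.closure ({σ, α} : Set (Equiv.Perm H)), p x = y) :
    ∃ g : ℕ, (cycleCount σ : ℤ) - cycleCount α + cycleCount (α * σ) = 2 - 2 * g := by
  classical
  set n := Fintype.card H with hn
  set v := cycleCount σ with hv
  set e := cycleCount α with he
  set r := cycleCount (α * σ) with hr
  have hclos : ∀ p ∈ Subgroup.closure ({σ, α} : Set (Equiv.Perm H)),
      ∀ x : H, FatgraphAux.orbS {σ, α} x (p x) := by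
    intro p hp
    induction hp using Subgroup.closure_induction with
    | mem q hq => exact fun x => FatgraphAux.orbS_move hq x
    | one => exact fun x => (FatgraphAux.orbS {σ, α}).refl' x
    | mul q q' hq hq' ihq ihq' =>
      intro x
      have h1 := ihq' x
      have h2 := ihq (q' x)
      exact (FatgraphAux.orbS {σ, α}).trans' h1 h2
    | inv q hq ihq =>
      intro x
      have h3 := ihq (q⁻¹ x)
      rw [← Equiv.Perm.mul_apply, mul_inv_cancel, Equiv.Perm.one_apply] at h3
      exact (FatgraphAux.orbS {σ, α}).symm' h3
  have horb : Nat.card (Quotient (FatgraphAux.orbS ({σ, α} : Set (Equiv.Perm H)))) = 1 := by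
    rw [Nat.card_eq_one_iff_unique]
    refine ⟨⟨fun q1 q2 => ?_⟩, ⟨Quotient.mk _ (Classical.arbitrary H)⟩⟩
    induction q1 using Quotient.ind with
  | _ x =>
    induction q2 using Quotient.ind with
  | _ y =>
    obtain ⟨p, hp, hpxy⟩ := hconn x y
    apply Quotient.sound
    show FatgraphAux.orbS {σ, α} x y
    have h4 := hclos p hp x
    rwa [hpxy] at h4
  have hkey := FatgraphAux.key α σ
  have hpair : ({α, σ} : Set (Equiv.Perm H)) = {σ, α} := Set.pair_comm α σ
  rw [hpair, horb] at hkey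
  have hα2 : α ^ 2 = 1 := by
    ext x
    simp [sq, Equiv.Perm.mul_apply, hinv]
  have hsupp : α.support = Finset.univ := by
    ext x
    simp [Equiv.Perm.mem_support, hfpf x]
  have hcyc2 : ∀ m ∈ α.cycleType, m = 2 := by
    intro m hm
    have h2le : 2 ≤ m := Equiv.Perm.two_le_of_mem_cycleType hm
    have hdvd : m ∣ orderOf α := by
      rw [← Equiv.Perm.lcm_cycleType]
      exact Multiset.dvd_lcm hm
    have hord : orderOf α ∣ 2 := orderOf_dvd_of_pow_eq_one hα2
    have hm2 : m ∣ 2 := hdvd.trans hord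
    have := Nat.le_of_dvd (by norm_num) hm2
    omega
  have hne : n = 2 * e := by
    have hsum : α.cycleType.sum = n := by
      rw [Equiv.Perm.sum_cycleType, hsupp, hn]
      simp
    have hrep : α.cycleType = Multiset.replicate (Multiset.card α.cycleType) 2 :=
      Multiset.eq_replicate.mpr ⟨rfl, hcyc2⟩
    have hsum2 : α.cycleType.sum = 2 * Multiset.card α.cycleType := by
      rw [hrep]
      simp [Multiset.sum_replicate, mul_comm]
    have hee : e = Multiset.card α.cycleType := by
      rw [he]
      unfold cycleCount
      rw [hsupp, ← hn]
      simp
      omega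
    omega
  have hineq : e + v + r ≤ n + 2 := by
    calc e + v + r ≤ n + 2 * 1 := hkey
    _ = n + 2 := by ring
  have hpar : (n + r) % 2 = ((n + e) + (n + v)) % 2 := by
    have hs : Equiv.Perm.sign (α * σ) = Equiv.Perm.sign α * Equiv.Perm.sign σ := map_mul _ _ _
    rw [FatgraphAux.sign_eq_pow, FatgraphAux.sign_eq_pow, FatgraphAux.sign_eq_pow,
      ← pow_add] at hs
    exact FatgraphAux.neg_one_pow_inj hs
  have hle : v + r ≤ e + 2 := by omega
  have hmod : (v + e + r) % 2 = 0 := by omega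
  refine ⟨(e + 2 - (v + r)) / 2, ?_⟩
  have hgg : e + 2 = v + r + 2 * ((e + 2 - (v + r)) / 2) := by omega
  omega
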